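/- If two flat Plebeia trees t₁ and t₂ over the same value type both satisfy the structural invariants (SI1) and (SI2) and their models are equal as partial maps (⟦t₁⟧(k) = ⟦t₂⟧(k) for every key k), then t₁ = t₂; i.e., the structural invariants force a canonical tree representation of each key–value store. -/

import Mathlib

/-- A side is `L` or `R`. -/
inductive Side : Type
  | L | R
deriving DecidableEq, Repr

/-- A key is a list of sides. -/
abbrev Key := List Side

/-- The strict order `L < R` on sides. -/
def Side.lt : Side → Side → Prop := fun a b => a = Side.L ∧ b = Side.R

/-- The strict lexicographic order on keys induced by `L < R`. -/
def keyLt : Key → Key → Prop := List.Lex Side.lt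

/-- A list of keys is prefix-free: for any two distinct keys in it,
neither is a prefix of the other. -/
def PrefixFreeList (ks : List Key) : Prop :=
  List.Pairwise (fun a b => ¬ a <+: b ∧ ¬ b <+: a) ks

/-- A set of keys is prefix-free. -/
def PrefixFreeSet (S : Set Key) : Prop :=
  ∀ a ∈ S, ∀ b ∈ S, a ≠ b → ¬ a <+: b

/-- A list of keys is strictly increasing in the lexicographic order. -/
def SortedKeys (ks : List Key) : Prop := List.Pairwise keyLt ks

/-- Key list of an association list is prefix-free and strictly increasing. -/
def GoodKeyList (ks : List Key) : Prop := PrefixFreeList ks ∧ SortedKeys ks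

/-- Prepend the key `s` to the key of every entry. -/
def prependAll {β : Type _} (s : Key) (l : List (Key × β)) : List (Key × β) :=
  l.map (fun e => (s ++ e.1, e.2))

/-- `lookup l k` is `some` of the value of the first entry of `l` with key `k`. -/
def lookupA {β : Type _} (l : List (Key × β)) (k : Key) : Option β :=
  (l.find? (fun e => decide (e.1 = k))).map Prod.snd
/-- Flat Plebeia trees over a value type `α`. -/
inductive FNode (α : Type) : Type
  | leaf : α → FNode α
  | branch : FNode α → FNode α → FNode α
  | extender : Key → FNode α → FNode α

variable {α : Type}

def FNode.isExtender : FNode α → Prop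
  | .extender _ _ => True
  | _ => False

/-- The model `⟦t⟧ : key ⇀ α` of a flat Plebeia tree, as a function into `Option`. -/
def FNode.model : FNode α → Key → Option α
  | .leaf v, [] => some v
  | .leaf _, _ :: _ => none
  | .branch l _, Side.L :: k => l.model k
  | .branch _ r, Side.R :: k => r.model k
  | .branch _ _, [] => none
  | .extender s n, k => if s <+: k then n.model (k.drop s.length) else none

/-- `DOM t`: the set of keys on which `⟦t⟧` is defined. -/
def FNode.dom (t : FNode α) : Set Key := {k | (t.model k).isSome}

/-- Structural invariants (SI1), (SI2) at every subtree:
no extender has an extender as direct child, and no extender has an empty key. -/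
def FNode.inv : FNode α → Prop
  | .leaf _ => True
  | .branch l r => l.inv ∧ r.inv
  | .extender s n => (¬ n.isExtender) ∧ s ≠ [] ∧ n.inv

namespace FNode

def wit : FNode α → Key
  | .leaf _ => []
  | .branch l _ => Side.L :: l.wit
  | .extender s n => s ++ n.wit

theorem wit_isSome (t : FNode α) : (t.model t.wit).isSome := by
  induction t with
  | leaf v => simp [wit, model]
  | branch l r ihl ihr => simpa [wit, model] using ihl
  | extender s n ih =>
    simp [wit, model, List.prefix_append, List.drop_left, ih]

theorem branch_wit_R (l r : FNode α) : ((FNode.branch l r).model (Side.R :: r.wit)).isSome := by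
  simpa [model] using r.wit_isSome

theorem ext_prefix {s : Key} {n : FNode α} {k : Key}
    (h : ((FNode.extender s n).model k).isSome) : s <+: k := by
  by_contra hp
  simp [model, hp] at h

theorem prefix_antisymm {a b : Key} (h : a <+: b) (h2 : b <+: a) : a = b :=
  List.IsPrefix.eq_of_length h (Nat.le_antisymm h.length_le h2.length_le)

/-- If the bigger extender's key is prefix of the smaller's... key equality lemma. -/
theorem ext_key_eq {s s' : Key} {n n' : FNode α}
    (hn : ¬ n.isExtender)
    (hmodel : ∀ k : Key, (FNode.extender s n).model k = (FNode.extender s' n').model k)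
    (hpre : s <+: s') : s = s' := by
  obtain ⟨t, rfl⟩ := hpre
  cases n with
  | leaf v =>
    -- key s is in dom of lhs
    have h1 : ((FNode.extender (s ++ t) n').model s).isSome := by
      rw [← hmodel]; simp [model]
    have := ext_prefix h1
    exact prefix_antisymm (List.prefix_append s t) this
  | branch l r =>
    have hL : ((FNode.extender (s ++ t) n').model (s ++ (Side.L :: l.wit))).isSome := by
      rw [← hmodel]
      simpa [model, List.prefix_append, List.drop_left] using l.wit_isSome
    have hR : ((FNode.extender (s ++ t) n').model (s ++ (Side.R :: r.wit))).isSome := by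
      rw [← hmodel]
      simpa [model, List.prefix_append, List.drop_left] using r.wit_isSome
    have hL' : t <+: Side.L :: l.wit := (List.prefix_append_right_inj s).mp (ext_prefix hL)
    have hR' : t <+: Side.R :: r.wit := (List.prefix_append_right_inj s).mp (ext_prefix hR)
    cases t with
    | nil => simp
    | cons c t' =>
      obtain ⟨u, hu⟩ := hL'
      obtain ⟨u', hu'⟩ := hR'
      simp at hu hu'
      rw [hu.1] at hu'
      exact absurd hu'.1 (by simp)
  | extender a b => exact absurd trivial hn

end FNode

theorem stmt4' {α : Type} (t₁ t₂ : FNode α) (h₁ : t₁.inv) (h₂ : t₂.inv)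
    (hmodel : ∀ k : Key, t₁.model k = t₂.model k) : t₁ = t₂ := by
  induction t₁ generalizing t₂ with
  | leaf v =>
    cases t₂ with
    | leaf w =>
      have := hmodel []
      simp [FNode.model] at this
      rw [this]
    | branch l r =>
      have := hmodel []
      simp [FNode.model] at this
    | extender s n =>
      obtain ⟨-, hs, -⟩ := h₂
      have := hmodel []
      rw [show (FNode.extender s n).model [] = none by
        simp [FNode.model, List.prefix_nil, hs]] at this
      simp [FNode.model] at this
  | branch l r ihl ihr =>
    cases t₂ with
    | leaf w =>
      have := hmodel []
      simp [FNode.model] at this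
    | branch l' r' =>
      have hl := ihl l' h₁.1 h₂.1 (fun k => hmodel (Side.L :: k))
      have hr := ihr r' h₁.2 h₂.2 (fun k => hmodel (Side.R :: k))
      rw [hl, hr]
    | extender s n =>
      obtain ⟨-, hs, -⟩ := h₂
      have hL : ((FNode.extender s n).model (Side.L :: l.wit)).isSome := by
        rw [← hmodel]; simpa [FNode.model] using l.wit_isSome
      have hR : ((FNode.extender s n).model (Side.R :: r.wit)).isSome := by
        rw [← hmodel]; simpa [FNode.model] using r.wit_isSome
      have hL' := FNode.ext_prefix hL
      have hR' := FNode.ext_prefix hR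
      cases s with
      | nil => exact absurd rfl hs
      | cons c s' =>
        obtain ⟨u, hu⟩ := hL'
        obtain ⟨u', hu'⟩ := hR'
        simp at hu hu'
        rw [hu.1] at hu'
        exact absurd hu'.1 (by simp)
  | extender s n ih =>
    cases t₂ with
    | leaf w =>
      obtain ⟨-, hs, -⟩ := h₁
      have := hmodel []
      rw [show (FNode.extender s n).model [] = none by
        simp [FNode.model, List.prefix_nil, hs]] at this
      simp [FNode.model] at this
    | branch l' r' =>
      obtain ⟨-, hs, -⟩ := h₁
      have hL : ((FNode.extender s n).model (Side.L :: l'.wit)).isSome := by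
        rw [hmodel]; simpa [FNode.model] using l'.wit_isSome
      have hR : ((FNode.extender s n).model (Side.R :: r'.wit)).isSome := by
        rw [hmodel]; simpa [FNode.model] using r'.wit_isSome
      have hL' := FNode.ext_prefix hL
      have hR' := FNode.ext_prefix hR
      cases s with
      | nil => exact absurd rfl hs
      | cons c s' =>
        obtain ⟨u, hu⟩ := hL'
        obtain ⟨u', hu'⟩ := hR'
        simp at hu hu'
        rw [hu.1] at hu'
        exact absurd hu'.1 (by simp)
    | extender s' n' =>
      obtain ⟨hn, hs, hni⟩ := h₁
      obtain ⟨hn', hs', hni'⟩ := h₂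
      -- both s and s' are prefixes of s ++ n.wit
      have hk : ((FNode.extender s' n').model (s ++ n.wit)).isSome := by
        rw [← hmodel]
        simpa [FNode.model, List.prefix_append, List.drop_left] using n.wit_isSome
      have hor := List.prefix_or_prefix_of_prefix (List.prefix_append s n.wit)
        (FNode.ext_prefix hk)
      have hss : s = s' := by
        rcases hor with h | h
        · exact FNode.ext_key_eq hn hmodel h
        · exact (FNode.ext_key_eq hn' (fun k => (hmodel k).symm) h).symm
      subst hss
      have hnn : n = n' := by
        apply ih n' hni hni'
        intro k
        have := hmodel (s ++ k)
        simpa [FNode.model, List.prefix_append, List.drop_left] using this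
      rw [hnn]

/-- two flat Plebeia trees satisfying the structural invariants
(SI1), (SI2) with equal models are equal. -/
theorem stmt4 {α : Type} (t₁ t₂ : FNode α) (h₁ : t₁.inv) (h₂ : t₂.inv)
    (hmodel : ∀ k : Key, t₁.model k = t₂.model k) : t₁ = t₂ := by
  exact stmt4' t₁ t₂ h₁ h₂ hmodel
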